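/- Let A = F₂({0,1}) and Ω¹ as in the 0–1 graph calculus, with bimodule connections on Ω¹ determined by σ(010) = a·010, σ(101) = b·101 for a, b ∈ F₂ via ∇ω = θ⊗ω + σ(ω⊗θ) with θ = 01+10. Then the metric compatibility condition ∇g = 0 for g = 010+101 holds if and only if a = b = 1, i.e., σ = id; thus the metric-compatible bimodule connection is unique. -/
import Mathlib


/- The 0–1 graph over F₂: bimodule connections are determined by
`σ(010) = a·010`, `σ(101) = b·101` via `∇ω = θ⊗ω + σ(ω⊗θ)` with `θ = 01+10`.
Bases: Ω¹ = {01,10}, 2-tensors {010,101}, 3-tensors {0101,1010};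
elements are recorded by coordinates. -/

abbrev Omega1 := ZMod 2 × ZMod 2  -- coordinates (c₀₁, c₁₀)
abbrev Omega2 := ZMod 2 × ZMod 2  -- coordinates (c₀₁₀, c₁₀₁)
abbrev Omega3 := ZMod 2 × ZMod 2  -- coordinates (c₀₁₀₁, c₁₀₁₀)

/-- The unique metric `g = 010 + 101`. -/
def gMet : Omega2 := (1, 1)

/-- The general bimodule map `σ`, diagonal on the basis `{010, 101}`. -/
def sigma (a b : ZMod 2) : Omega2 → Omega2 := fun c => (a * c.1, b * c.2)

/-- `∇ω = θ⊗ω + σ(ω⊗θ)`: for `ω = x·01 + y·10`,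
`θ⊗ω = y·010 + x·101` and `ω⊗θ = x·010 + y·101`. -/
def nabla (a b : ZMod 2) : Omega1 → Omega2 :=
  fun ω => ((ω.2, ω.1) : Omega2) + sigma a b (ω.1, ω.2)

/-- Tensoring on the right by `10`: `010⊗10 = 0`, `101⊗10 = 1010`. -/
def tensorR10 : Omega2 → Omega3 := fun c => (0, c.2)
/-- Tensoring on the right by `01`: `010⊗01 = 0101`, `101⊗01 = 0`. -/
def tensorR01 : Omega2 → Omega3 := fun c => (c.1, 0)
/-- Tensoring on the left by `01`: `01⊗010 = 0`, `01⊗101 = 0101`. -/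
def tensorL01 : Omega2 → Omega3 := fun c => (c.2, 0)
/-- Tensoring on the left by `10`: `10⊗010 = 1010`, `10⊗101 = 0`. -/
def tensorL10 : Omega2 → Omega3 := fun c => (0, c.1)
/-- `σ ⊗ id` on 3-tensors (acting on the first two steps). -/
def sigmaTensorId (a b : ZMod 2) : Omega3 → Omega3 := fun c => (a * c.1, b * c.2)

/-- `∇g = ∇(01)⊗10 + ∇(10)⊗01 + (σ⊗id)(01⊗∇(10) + 10⊗∇(01))`. -/
def nablaG (a b : ZMod 2) : Omega3 :=
  tensorR10 (nabla a b (1, 0)) + tensorR01 (nabla a b (0, 1)) +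
    sigmaTensorId a b (tensorL01 (nabla a b (0, 1)) + tensorL10 (nabla a b (1, 0)))

/-- Metric compatibility `∇g = 0` holds iff `a = b = 1`, i.e. `σ = id`:
the metric-compatible bimodule connection on the 0–1 graph is unique. -/
theorem two_point_unique_metric_connection (a b : ZMod 2) :
    nablaG a b = 0 ↔ a = 1 ∧ b = 1 := by
  revert a b; decide
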